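/- Let f, g₀ : ℂ → ℂ be entire with g₀(0) = 1. Then the function f̃ : ℂ² → ℂ defined by f̃(t, z) = (t·f(t)·g₀(z) − z·f(z)·g₀(t))/(t − z) for t ≠ z and f̃(z, z) = z·g₀(z)·f′(z) − z·f(z)·g₀′(z) + f(z)·g₀(z) is holomorphic (complex differentiable) on all of ℂ × ℂ. -/

import Mathlib

open Complex

/-- The shift operator `T_z` for the Pommiez operator `D_{0,g₀}`. -/
noncomputable def shiftT (g₀ f : ℂ → ℂ) (z : ℂ) : ℂ → ℂ := fun t =>
  if t = z then z * g₀ z * deriv f z - z * f z * deriv g₀ z + f z * g₀ z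
  else (t * f t * g₀ z - z * f z * g₀ t) / (t - z)

/-- Derivative of an entire function is entire. -/
theorem deriv_entire' {h : ℂ → ℂ} (hh : Differentiable ℂ h) : Differentiable ℂ (deriv h) := by
  have : AnalyticOnNhd ℂ h Set.univ := Complex.analyticOnNhd_univ_iff_differentiable.2 hh
  exact Complex.analyticOnNhd_univ_iff_differentiable.1 this.deriv

/-- Two-variable divided difference. -/
noncomputable def divDiff (h : ℂ → ℂ) (p : ℂ × ℂ) : ℂ :=
  if p.1 = p.2 then deriv h p.1 else (h p.1 - h p.2) / (p.1 - p.2)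

theorem divDiff_eq_integral {h : ℂ → ℂ} (hh : Differentiable ℂ h) (p : ℂ × ℂ) :
    divDiff h p = ∫ s in (0:ℝ)..1, deriv h (p.2 + (s : ℂ) * (p.1 - p.2)) := by
  obtain ⟨t, z⟩ := p
  by_cases htz : t = z
  · subst htz
    simp [divDiff]
  · have hne : t - z ≠ 0 := sub_ne_zero.2 htz
    have hcont : Continuous fun s : ℝ => deriv h (z + (s : ℂ) * (t - z)) :=
      (deriv_entire' hh).continuous.comp
        (continuous_const.add (Complex.continuous_ofReal.mul continuous_const))
    have hder : ∀ s ∈ Set.uIcc (0:ℝ) 1,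
        HasDerivAt (fun s : ℝ => h (z + (s : ℂ) * (t - z)))
          (deriv h (z + (s : ℂ) * (t - z)) * (t - z)) s := by
      intro s _
      have inner : HasDerivAt (fun w : ℂ => z + w * (t - z)) (t - z) (s : ℂ) := by
        simpa using ((hasDerivAt_id ((s : ℝ) : ℂ)).mul_const (t - z)).const_add z
      have h1 : HasDerivAt (fun w : ℂ => h (z + w * (t - z)))
          (deriv h (z + (s : ℂ) * (t - z)) * (t - z)) (s : ℂ) :=
        (hh (z + (s : ℂ) * (t - z))).hasDerivAt.comp ((s : ℝ) : ℂ) inner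
      exact h1.comp_ofReal
    have key : (∫ s in (0:ℝ)..1, deriv h (z + (s : ℂ) * (t - z)) * (t - z)) = h t - h z := by
      rw [intervalIntegral.integral_eq_sub_of_hasDerivAt hder
        ((hcont.mul continuous_const).intervalIntegrable 0 1)]
      norm_num
    rw [intervalIntegral.integral_mul_const] at key
    simp only [divDiff, if_neg htz]
    rw [div_eq_iff hne]
    exact key.symm

theorem divDiff_differentiable {h : ℂ → ℂ} (hh : Differentiable ℂ h) :
    Differentiable ℂ (divDiff h) := by
  have hd1 : Differentiable ℂ (deriv h) := deriv_entire' hh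
  have hd2 : Differentiable ℂ (deriv (deriv h)) := deriv_entire' hd1
  intro p₀
  set L : ℝ → (ℂ × ℂ) →L[ℂ] ℂ := fun s =>
    ContinuousLinearMap.snd ℂ ℂ ℂ +
      ((s : ℝ) : ℂ) • (ContinuousLinearMap.fst ℂ ℂ ℂ - ContinuousLinearMap.snd ℂ ℂ ℂ) with hL
  set F' : (ℂ × ℂ) → ℝ → (ℂ × ℂ) →L[ℂ] ℂ := fun p s =>
    ((1 : ℂ →L[ℂ] ℂ).smulRight (deriv (deriv h) (p.2 + (s : ℂ) * (p.1 - p.2)))).comp (L s)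
    with hF'
  -- bound for second derivative on a large ball
  set R : ℝ := ‖p₀.1‖ + 2 * ‖p₀.2‖ + 3 with hR
  obtain ⟨C, hC⟩ := (isCompact_closedBall (0 : ℂ) R).exists_bound_of_continuousOn
    hd2.continuous.continuousOn
  set M : ℝ := max C 0 with hM
  have hM0 : 0 ≤ M := le_max_right _ _
  have harg : ∀ p ∈ Metric.ball p₀ 1, ∀ s ∈ Set.uIoc (0:ℝ) 1,
      (p.2 + (s : ℂ) * (p.1 - p.2)) ∈ Metric.closedBall (0 : ℂ) R := by
    intro p hp s hs
    rw [Set.uIoc_of_le (by norm_num : (0:ℝ) ≤ 1)] at hs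
    have hs0 : 0 ≤ s := le_of_lt hs.1
    have hs1 : s ≤ 1 := hs.2
    have h1 : ‖p.1 - p₀.1‖ ≤ 1 := by
      calc ‖p.1 - p₀.1‖ = ‖(p - p₀).1‖ := rfl
        _ ≤ ‖p - p₀‖ := norm_fst_le _
        _ ≤ 1 := le_of_lt (mem_ball_iff_norm.mp hp)
    have h2 : ‖p.2 - p₀.2‖ ≤ 1 := by
      calc ‖p.2 - p₀.2‖ = ‖(p - p₀).2‖ := rfl
        _ ≤ ‖p - p₀‖ := norm_snd_le _
        _ ≤ 1 := le_of_lt (mem_ball_iff_norm.mp hp)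
    have hp1 : ‖p.1‖ ≤ ‖p₀.1‖ + 1 := by
      calc ‖p.1‖ = ‖p₀.1 + (p.1 - p₀.1)‖ := by ring_nf
        _ ≤ ‖p₀.1‖ + ‖p.1 - p₀.1‖ := norm_add_le _ _
        _ ≤ ‖p₀.1‖ + 1 := by linarith
    have hp2 : ‖p.2‖ ≤ ‖p₀.2‖ + 1 := by
      calc ‖p.2‖ = ‖p₀.2 + (p.2 - p₀.2)‖ := by ring_nf
        _ ≤ ‖p₀.2‖ + ‖p.2 - p₀.2‖ := norm_add_le _ _
        _ ≤ ‖p₀.2‖ + 1 := by linarith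
    rw [Metric.mem_closedBall, dist_zero_right]
    have hsnorm : ‖((s : ℝ) : ℂ)‖ = s := by
      rw [Complex.norm_real, Real.norm_eq_abs, _root_.abs_of_nonneg hs0]
    calc ‖p.2 + (s : ℂ) * (p.1 - p.2)‖ ≤ ‖p.2‖ + ‖(s : ℂ) * (p.1 - p.2)‖ := norm_add_le _ _
      _ = ‖p.2‖ + s * ‖p.1 - p.2‖ := by rw [norm_mul, hsnorm]
      _ ≤ ‖p.2‖ + 1 * (‖p.1‖ + ‖p.2‖) := by
          have := norm_sub_le p.1 p.2
          have hs' : s * ‖p.1 - p.2‖ ≤ 1 * (‖p.1‖ + ‖p.2‖) := by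
            apply mul_le_mul hs1 this (norm_nonneg _) zero_le_one
          linarith
      _ ≤ R := by rw [hR]; linarith
  have hFd : ∀ s : ℝ, ∀ p : ℂ × ℂ,
      HasFDerivAt (fun q : ℂ × ℂ => deriv h (q.2 + (s : ℂ) * (q.1 - q.2))) (F' p s) p := by
    intro s p
    have inner : HasFDerivAt (fun q : ℂ × ℂ => q.2 + (s : ℂ) * (q.1 - q.2)) (L s) p := by
      exact (hasFDerivAt_snd.add ((hasFDerivAt_fst.sub hasFDerivAt_snd).const_mul _))
    exact ((hd1 _).hasDerivAt.hasFDerivAt.comp p inner)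
  have hF'norm : ∀ p ∈ Metric.ball p₀ 1, ∀ s ∈ Set.uIoc (0:ℝ) 1, ‖F' p s‖ ≤ 3 * M := by
    intro p hp s hs
    rw [Set.uIoc_of_le (by norm_num : (0:ℝ) ≤ 1)] at hs
    have hs0 : 0 ≤ s := le_of_lt hs.1
    have hs1 : s ≤ 1 := hs.2
    have hd2bound : ‖deriv (deriv h) (p.2 + (s : ℂ) * (p.1 - p.2))‖ ≤ M := by
      refine le_trans (hC _ ?_) (le_max_left _ _)
      exact harg p hp s (by rw [Set.uIoc_of_le (by norm_num : (0:ℝ) ≤ 1)]; exact hs)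
    apply ContinuousLinearMap.opNorm_le_bound _ (by positivity)
    intro x
    have happ : F' p s x = (x.2 + (s : ℂ) * (x.1 - x.2)) •
        deriv (deriv h) (p.2 + (s : ℂ) * (p.1 - p.2)) := by
      simp [hF', hL, ContinuousLinearMap.smulRight_apply]
      ring
    rw [happ, norm_smul]
    have hsnorm : ‖((s : ℝ) : ℂ)‖ = s := by
      rw [Complex.norm_real, Real.norm_eq_abs, _root_.abs_of_nonneg hs0]
    have hLx : ‖x.2 + (s : ℂ) * (x.1 - x.2)‖ ≤ 3 * ‖x‖ := by
      have h1 : ‖x.1‖ ≤ ‖x‖ := norm_fst_le x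
      have h2 : ‖x.2‖ ≤ ‖x‖ := norm_snd_le x
      calc ‖x.2 + (s : ℂ) * (x.1 - x.2)‖ ≤ ‖x.2‖ + ‖(s : ℂ) * (x.1 - x.2)‖ := norm_add_le _ _
        _ = ‖x.2‖ + s * ‖x.1 - x.2‖ := by rw [norm_mul, hsnorm]
        _ ≤ ‖x.2‖ + 1 * (‖x.1‖ + ‖x.2‖) := by
            have := norm_sub_le x.1 x.2
            have : s * ‖x.1 - x.2‖ ≤ 1 * (‖x.1‖ + ‖x.2‖) :=
              mul_le_mul hs1 this (norm_nonneg _) zero_le_one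
            linarith
        _ ≤ 3 * ‖x‖ := by linarith
    calc ‖x.2 + (s : ℂ) * (x.1 - x.2)‖ * ‖deriv (deriv h) (p.2 + (s : ℂ) * (p.1 - p.2))‖
        ≤ (3 * ‖x‖) * M := by
          apply mul_le_mul hLx hd2bound (norm_nonneg _) (by positivity)
      _ = 3 * M * ‖x‖ := by ring
  have hcont : ∀ p : ℂ × ℂ, Continuous fun s : ℝ => deriv h (p.2 + (s : ℂ) * (p.1 - p.2)) := by
    intro p
    exact hd1.continuous.comp
      (continuous_const.add (Complex.continuous_ofReal.mul continuous_const))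
  have hF'cont : Continuous (F' p₀) := by
    apply Continuous.clm_comp
    · exact (ContinuousLinearMap.smulRightL ℂ ℂ ℂ (1 : ℂ →L[ℂ] ℂ)).continuous.comp
        (hd2.continuous.comp
          (continuous_const.add (Complex.continuous_ofReal.mul continuous_const)))
    · exact continuous_const.add
        ((Complex.continuous_ofReal.smul continuous_const))
  have key : HasFDerivAt
      (fun p : ℂ × ℂ => ∫ s in (0:ℝ)..1, deriv h (p.2 + (s : ℂ) * (p.1 - p.2)))
      (∫ s in (0:ℝ)..1, F' p₀ s) p₀ := by
    apply intervalIntegral.hasFDerivAt_integral_of_dominated_of_fderiv_le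
      (F' := F') (bound := fun _ => 3 * M) (Metric.ball_mem_nhds p₀ one_pos)
    · exact Filter.Eventually.of_forall fun p => ((hcont p).aestronglyMeasurable)
    · exact (hcont p₀).intervalIntegrable 0 1
    · exact hF'cont.aestronglyMeasurable
    · exact Filter.Eventually.of_forall fun s hs p hp => hF'norm p hp s hs
    · exact intervalIntegrable_const
    · exact Filter.Eventually.of_forall fun s _ p _ => hFd s p
  have e : divDiff h = fun p : ℂ × ℂ =>
      ∫ s in (0:ℝ)..1, deriv h (p.2 + (s : ℂ) * (p.1 - p.2)) :=
    funext fun p => divDiff_eq_integral hh p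
  rw [e]
  exact key.differentiableAt

/-- for entire `f, g₀` with `g₀(0) = 1`, the function
`f̃(t, z) = T_z(f)(t)` is holomorphic on all of `ℂ × ℂ`. -/
theorem shiftT_differentiable_two_variables
    (f g₀ : ℂ → ℂ) (hf : Differentiable ℂ f) (hg₀ : Differentiable ℂ g₀)
    (hg₀0 : g₀ 0 = 1) :
    Differentiable ℂ (fun p : ℂ × ℂ => shiftT g₀ f p.2 p.1) := by
  have hh : Differentiable ℂ fun w : ℂ => w * f w := differentiable_id.mul hf
  have e : (fun p : ℂ × ℂ => shiftT g₀ f p.2 p.1)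
      = fun p : ℂ × ℂ => g₀ p.2 * divDiff (fun w => w * f w) p - p.2 * f p.2 * divDiff g₀ p := by
    funext p
    obtain ⟨t, z⟩ := p
    by_cases htz : t = z
    · subst htz
      simp only [shiftT, divDiff, eq_self_iff_true, if_true]
      have hdm : deriv (fun w : ℂ => w * f w) t = f t + t * deriv f t := by
        have := deriv_fun_mul (differentiableAt_id (x := t)) (hf t)
        simpa using this
      rw [hdm]; ring
    · simp only [shiftT, divDiff, if_neg htz]
      have hne : t - z ≠ 0 := sub_ne_zero.2 htz
      field_simp
      ring
  rw [e]
  exact ((hg₀.comp differentiable_snd).mul (divDiff_differentiable hh)).sub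
    ((differentiable_snd.mul (hf.comp differentiable_snd)).mul (divDiff_differentiable hg₀))
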